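/- The function A₁(γ) = H_q(γ)·γ/((q−1)(γ−1)) + γ^q is strictly decreasing on the interval (1, q/(q−1)). -/

import Mathlib

noncomputable section

open Real Set

/-- `H r z = r·z^(r-1) - (r-1)·z^r`. -/
def H (r z : ℝ) : ℝ := r * z ^ (r - 1) - (r - 1) * z ^ r

/-- `ω` is the inverse of `H r`, mapping `(0,1]` into `[1, r/(r-1))`,
    so that `H r (ω s) = s` for `s ∈ (0,1]`. -/
def IsOmega (r : ℝ) (ω : ℝ → ℝ) : Prop :=
  ∀ s ∈ Set.Ioc (0 : ℝ) 1, ω s ∈ Set.Ico (1 : ℝ) (r / (r - 1)) ∧ H r (ω s) = s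

/-- `τ(s₁,s₂,t) = ((p-q)/p)·(t^p - s₁)/(t^(p-q) - s₁/s₂)`. -/
def tau (p q s₁ s₂ t : ℝ) : ℝ :=
  ((p - q) / p) * ((t ^ p - s₁) / (t ^ (p - q) - s₁ / s₂))

/-- `F(τ)` from the paper, where `ω` plays the role of `ω_q`. -/
def Ffun (p q : ℝ) (ω : ℝ → ℝ) (τ : ℝ) : ℝ :=
  (τ / (1 - ω τ)) * (p - (q * (p - 1) / (q - 1)) * ω τ)
    - q * (p * ω τ ^ (q - 1) - (p - 1) * ω τ ^ q)

/-- `A(s)` from the paper, where `ω` plays the role of `ω_q`. -/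
def Afun (q : ℝ) (ω : ℝ → ℝ) (s : ℝ) : ℝ :=
  s * (ω s / ((q - 1) * (ω s - 1)) + ω s ^ q / s)

/-- `A₁(γ) = H_q(γ)·γ/((q−1)(γ−1)) + γ^q` is strictly decreasing
on `(1, q/(q−1))`. -/
theorem stmt_4 (p q : ℝ) (hq : 1 < q) (hqp : q < p) :
    StrictAntiOn (fun γ : ℝ => H q γ * γ / ((q - 1) * (γ - 1)) + γ ^ q)
      (Set.Ioo (1 : ℝ) (q / (q - 1))) := by
  have hq1 : (0:ℝ) < q - 1 := by linarith
  -- the simplified form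
  have key : StrictAntiOn (fun x : ℝ => x ^ q / ((q - 1) * (x - 1)))
      (Set.Ioo (1 : ℝ) (q / (q - 1))) := by
    apply strictAntiOn_of_deriv_neg (convex_Ioo _ _)
    · apply ContinuousOn.div
      · exact continuousOn_id.rpow_const (fun x _ => Or.inr (by linarith))
      · exact (continuous_const.mul (continuous_id.sub continuous_const)).continuousOn
      · intro x hx
        have : (0:ℝ) < x - 1 := by linarith [hx.1]
        positivity
    · intro x hx
      rw [interior_Ioo] at hx
      obtain ⟨hx1, hx2⟩ := hx
      have hx0 : (0:ℝ) < x := by linarith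
      have hD : (0:ℝ) < (q - 1) * (x - 1) := by
        have : (0:ℝ) < x - 1 := by linarith
        positivity
      have hd : HasDerivAt (fun x : ℝ => x ^ q / ((q - 1) * (x - 1)))
          ((q * x ^ (q - 1) * ((q - 1) * (x - 1)) - x ^ q * ((q - 1) * 1)) /
            ((q - 1) * (x - 1)) ^ 2) x := by
        exact HasDerivAt.div (Real.hasDerivAt_rpow_const (Or.inl hx0.ne'))
          (((hasDerivAt_id x).sub_const 1).const_mul (q - 1)) hD.ne'
      rw [hd.deriv]
      apply div_neg_of_neg_of_pos _ (by positivity)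
      have hxq : x ^ q = x ^ (q - 1) * x := by
        rw [← Real.rpow_add_one hx0.ne' (q - 1)]; ring_nf
      have hxp : (0:ℝ) < x ^ (q - 1) := Real.rpow_pos_of_pos hx0 _
      have hlt : (q - 1) * x < q := by
        have h := (lt_div_iff₀ hq1).mp hx2
        linarith
      nlinarith [mul_pos hq1 hxp, mul_pos (mul_pos hq1 hxp) (sub_pos.mpr hlt)]
  intro a ha b hb hab
  have e : ∀ x ∈ Set.Ioo (1:ℝ) (q / (q - 1)),
      H q x * x / ((q - 1) * (x - 1)) + x ^ q = x ^ q / ((q - 1) * (x - 1)) := by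
    intro x hx
    have hx0 : (0:ℝ) < x := by linarith [hx.1]
    have hD : ((q - 1) * (x - 1)) ≠ 0 := by
      have : (0:ℝ) < x - 1 := by linarith [hx.1]
      positivity
    have hxq : x ^ (q - 1) * x = x ^ q := by
      rw [← Real.rpow_add_one hx0.ne' (q - 1)]; ring_nf
    rw [H]
    field_simp
    have hx1 : x - 1 ≠ 0 := (sub_pos.mpr hx.1).ne'
    field_simp
    nlinarith [hxq]
  dsimp only
  rw [e a ha, e b hb]
  exact key ha hb hab
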